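/- The function r ↦ K(r)/r is strictly decreasing on the interval (1, ∞) (indeed r·K′(r) − K(r) = −4√(r²−1)/r < 0 there); consequently, for every real λ the equation K(r) = λ·r has at most one solution r in (1, ∞). -/

import Mathlib

open Real Set

/-- The function `K(r) = π r + (2/r)√(r²−1) − 2r·arctan(√(r²−1))`. -/
noncomputable def K (r : ℝ) : ℝ :=
  π * r + (2 / r) * Real.sqrt (r ^ 2 - 1) - 2 * r * Real.arctan (Real.sqrt (r ^ 2 - 1))

/-- The derivative `K′(r) = π − 2√(r²−1)/r² − 2·arctan(√(r²−1))` of `K`. -/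
noncomputable def K' (r : ℝ) : ℝ :=
  π - 2 * Real.sqrt (r ^ 2 - 1) / r ^ 2 - 2 * Real.arctan (Real.sqrt (r ^ 2 - 1))

lemma sqrt_pos' {r : ℝ} (hr : 1 < r) : 0 < Real.sqrt (r ^ 2 - 1) := by
  apply Real.sqrt_pos.2; nlinarith

lemma hasDerivAt_K {r : ℝ} (hr : 1 < r) : HasDerivAt K (K' r) r := by
  have hr0 : (0:ℝ) < r := by linarith
  set s := Real.sqrt (r ^ 2 - 1) with hs
  have hs0 : 0 < s := sqrt_pos' hr
  have hsq : s ^ 2 = r ^ 2 - 1 := Real.sq_sqrt (by nlinarith)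
  have hinner : HasDerivAt (fun x : ℝ => x ^ 2 - 1) (2 * r) r := by
    simpa using ((hasDerivAt_pow 2 r).sub_const 1)
  have hsd : HasDerivAt (fun x : ℝ => Real.sqrt (x ^ 2 - 1)) (r / s) r := by
    have h := (Real.hasDerivAt_sqrt (x := r ^ 2 - 1) (by nlinarith)).comp r hinner
    refine h.congr_deriv ?_
    rw [← hs]
    field_simp
  have hat : HasDerivAt (fun x : ℝ => Real.arctan (Real.sqrt (x ^ 2 - 1)))
      (1 / (1 + s ^ 2) * (r / s)) r := by
    exact (Real.hasDerivAt_arctan s).comp r hsd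
  have h1 : HasDerivAt (fun x : ℝ => π * x) π r := by
    simpa using (hasDerivAt_id r).const_mul π
  have h2 : HasDerivAt (fun x : ℝ => (2 / x) * Real.sqrt (x ^ 2 - 1))
      (((2:ℝ) * (r / s) * r - 2 * s * 1) / r ^ 2) r := by
    have h : HasDerivAt (fun x : ℝ => (2 * Real.sqrt (x ^ 2 - 1)) / x)
        (((2:ℝ) * (r / s) * r - 2 * s * 1) / r ^ 2) r :=
      ((hsd.const_mul 2).div (hasDerivAt_id r) (ne_of_gt hr0))
    convert h using 2 with x
    ring
  have h3 : HasDerivAt (fun x : ℝ => 2 * x * Real.arctan (Real.sqrt (x ^ 2 - 1)))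
      (2 * Real.arctan s + 2 * r * (1 / (1 + s ^ 2) * (r / s))) r := by
    have h := ((hasDerivAt_id r).const_mul 2).mul hat
    refine h.congr_deriv ?_
    simp only [id_eq, ← hs]
    ring
  have h := (h1.add h2).sub h3
  refine h.congr_deriv ?_
  rw [K', ← hs]
  have h1s : 1 + s ^ 2 = r ^ 2 := by rw [hsq]; ring
  rw [h1s]
  field_simp
  linear_combination (0 : ℝ) * hsq

theorem K_div_r_strictAnti :
    (∀ r : ℝ, 1 < r →
      r * K' r - K r = -4 * Real.sqrt (r ^ 2 - 1) / r ∧ r * K' r - K r < 0) ∧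
    StrictAntiOn (fun r => K r / r) (Set.Ioi (1:ℝ)) ∧
    ∀ lam : ℝ, ∀ r₁ ∈ Set.Ioi (1:ℝ), ∀ r₂ ∈ Set.Ioi (1:ℝ),
      K r₁ = lam * r₁ → K r₂ = lam * r₂ → r₁ = r₂ := by
  have key : ∀ r : ℝ, 1 < r →
      r * K' r - K r = -4 * Real.sqrt (r ^ 2 - 1) / r ∧ r * K' r - K r < 0 := by
    intro r hr
    have hr0 : (0:ℝ) < r := by linarith
    have hs0 := sqrt_pos' hr
    have heq : r * K' r - K r = -4 * Real.sqrt (r ^ 2 - 1) / r := by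
      rw [K, K']; field_simp; ring
    refine ⟨heq, ?_⟩
    rw [heq]
    exact div_neg_of_neg_of_pos (by nlinarith) hr0
  have hsa : StrictAntiOn (fun r => K r / r) (Set.Ioi (1:ℝ)) := by
    apply strictAntiOn_of_deriv_neg (convex_Ioi 1)
    · intro x hx
      exact ((hasDerivAt_K hx).div (hasDerivAt_id x)
        (ne_of_gt (by linarith [mem_Ioi.1 hx] : (0:ℝ) < x))).continuousAt.continuousWithinAt
    · intro x hx
      rw [interior_Ioi] at hx
      have hx1 : 1 < x := hx
      have hx0 : (0:ℝ) < x := by linarith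
      have hd := (hasDerivAt_K hx1).div (hasDerivAt_id x) (ne_of_gt hx0)
      simp only [id_eq] at hd
      rw [show (fun r => K r / r) = K / id from rfl, hd.deriv]
      have hnum := (key x hx1).2
      exact div_neg_of_neg_of_pos (by nlinarith) (by positivity)
  refine ⟨key, hsa, ?_⟩
  intro lam r₁ h₁ r₂ h₂ e₁ e₂
  apply hsa.injOn h₁ h₂
  have hr₁ : (r₁:ℝ) ≠ 0 := ne_of_gt (by linarith [mem_Ioi.1 h₁])
  have hr₂ : (r₂:ℝ) ≠ 0 := ne_of_gt (by linarith [mem_Ioi.1 h₂])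
  simp only
  rw [e₁, e₂, mul_div_assoc, mul_div_assoc, div_self hr₁, div_self hr₂]
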